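/- An open subspace of a T₁ space satisfying the well-ordered (F) condition also satisfies the well-ordered (F) condition. -/

import Mathlib

open Set Topology

/-- The core (F) condition for a family `W` assigning to each point a collection of subsets. -/
def FFamilyCondition {X : Type*} [TopologicalSpace X] (W : X → Set (Set X)) : Prop :=
  (∀ x, ∀ w ∈ W x, x ∈ w) ∧
  ∀ x U, IsOpen U → x ∈ U → ∃ V, IsOpen V ∧ x ∈ V ∧
    ∀ y ∈ V, ∃ w ∈ W y, x ∈ w ∧ w ⊆ U

/-- `X` satisfies well-ordered (F): each `W x` is well-ordered by reverse inclusion. -/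
def SatisfiesWellOrderedF (X : Type*) [TopologicalSpace X] : Prop :=
  ∃ W : X → Set (Set X),
    (∀ x, IsWellOrder (W x) (fun A B => (B : Set X) ⊂ (A : Set X))) ∧
    FFamilyCondition W

/-- `X` satisfies chain (F): each `W x` is linearly ordered by (reverse) inclusion. -/
def SatisfiesChainF (X : Type*) [TopologicalSpace X] : Prop :=
  ∃ W : X → Set (Set X),
    (∀ x, IsChain (· ⊆ ·) (W x)) ∧
    FFamilyCondition W

/-- `X` satisfies decreasing (G). -/
def SatisfiesDecreasingG (X : Type*) [TopologicalSpace X] : Prop :=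
  ∃ W : X → ℕ → Set X,
    (∀ x k, x ∈ W x k) ∧ (∀ x k, W x (k + 1) ⊆ W x k) ∧
    ∀ x U, IsOpen U → x ∈ U → ∃ V, IsOpen V ∧ x ∈ V ∧
      ∀ y ∈ V, ∃ m, x ∈ W y m ∧ W y m ⊆ U

universe u_hn

/-- The `H`/`n` characterization with ordinal-valued `n`. -/
def HNAssignment (X : Type u_hn) [TopologicalSpace X] : Prop :=
  ∃ (H : X → Set X → Set X) (n : X → X → Set X → Ordinal.{u_hn}),
    (∀ x U, IsOpen U → x ∈ U → IsOpen (H x U) ∧ x ∈ H x U) ∧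
    (∀ a x y U V, IsOpen U → x ∈ U → IsOpen V → y ∈ V →
      a ∈ H x U → a ∈ H y V → n a x U ≤ n a y V → y ∈ U)

/-- `X` is a D-space: every neighborhood assignment has a closed discrete kernel. -/
def IsDSpace (X : Type*) [TopologicalSpace X] : Prop :=
  ∀ φ : X → Set X, (∀ x, IsOpen (φ x)) → (∀ x, x ∈ φ x) →
    ∃ D : Set X, IsClosed D ∧ DiscreteTopology D ∧ ⋃ d ∈ D, φ d = Set.univ

theorem stmt16 {X : Type*} [TopologicalSpace X] [T1Space X]
    (h : SatisfiesWellOrderedF X) (U : Set X) (hU : IsOpen U) :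
    SatisfiesWellOrderedF U := by
  obtain ⟨W, hWO, hmem, hF⟩ := h
  set W' : U → Set (Set U) := fun x => (fun w => (Subtype.val ⁻¹' w : Set U)) '' (W x.val)
    with hW'
  refine ⟨W', ?_, ?_, ?_⟩
  · -- well-order
    intro x
    haveI := hWO x.val
    refine { toTrichotomous := ⟨fun a b h1 h2 => (((?_ : ∀ a b : W' x,
      (b : Set U) ⊂ (a : Set U) ∨ a = b ∨ (a : Set U) ⊂ (b : Set U)) a b).resolve_left h1).resolve_right h2⟩, toIsWellFounded := ⟨?_⟩ }
    rotate_left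
    · 
      rintro ⟨A, wA, hwA, hA⟩ ⟨B, wB, hwB, hB⟩
      rcases eq_or_ne A B with hAB | hAB
      · right; left; exact Subtype.ext hAB
      · have key : B ⊆ A ∨ A ⊆ B := by
          rcases trichotomous_of (fun (A B : W x.val) => (B : Set X) ⊂ (A : Set X))
            ⟨wA, hwA⟩ ⟨wB, hwB⟩ with h1 | h1 | h1
          · left; rw [← hA, ← hB]; exact Set.preimage_mono h1.subset
          · left; rw [← hA, ← hB]
            exact Set.preimage_mono (congrArg Subtype.val h1).symm.subset
          · right; rw [← hA, ← hB]; exact Set.preimage_mono h1.subset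
        rcases key with hk | hk
        · left; exact lt_of_le_of_ne hk hAB.symm
        · right; right; exact lt_of_le_of_ne hk hAB
    · -- choose preimages
      have hpre : ∀ A : W' x, ∃ w : W x.val, (Subtype.val ⁻¹' (w : Set X) : Set U) = A := by
        rintro ⟨A, wA, hwA, hA⟩
        exact ⟨⟨wA, hwA⟩, hA⟩
      choose f hf using hpre
      have hhom : ∀ A B : W' x, ((B : Set U) ⊂ (A : Set U)) →
          ((f B : Set X) ⊂ (f A : Set X)) := by
        intro A B hlt
        rcases trichotomous_of (fun (A B : W x.val) => (B : Set X) ⊂ (A : Set X))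
          (f A) (f B) with h1 | h1 | h1
        · exact h1
        · exfalso
          have : (B : Set U) = (A : Set U) := by
            rw [← hf A, ← hf B, h1]
          exact hlt.ne this
        · exfalso
          have : (A : Set U) ⊆ (B : Set U) := by
            rw [← hf A, ← hf B]; exact Set.preimage_mono h1.subset
          exact hlt.not_subset this
      exact Subrelation.wf (fun {A B} hr => hhom A B hr) (InvImage.wf f (hWO x.val).wf)
  · -- each member contains the point
    rintro x w ⟨w0, hw0, rfl⟩
    exact hmem x.val w0 hw0
  · -- the core condition
    intro x V hV hxV
    have hVX : IsOpen (Subtype.val '' V : Set X) := hU.isOpenMap_subtype_val V hV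
    have hxVX : (x : X) ∈ Subtype.val '' V := ⟨x, hxV, rfl⟩
    obtain ⟨G, hG, hxG, hG'⟩ := hF x.val _ hVX hxVX
    refine ⟨Subtype.val ⁻¹' G, hG.preimage continuous_subtype_val, hxG, ?_⟩
    intro y hy
    obtain ⟨w, hw, hxw, hwsub⟩ := hG' y.val hy
    refine ⟨Subtype.val ⁻¹' w, ⟨w, hw, rfl⟩, hxw, ?_⟩
    intro z hz
    obtain ⟨z', hz', hzz'⟩ := hwsub hz
    rwa [show z' = z from Subtype.ext hzz'] at hz'
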